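/- (Smoothness of the ANIL meta-gradient in w under a strongly convex inner loop: per-task explicit bound.) Let L_S, L_D : ℝ^{n_w} × ℝ^{n_φ} → ℝ be twice continuously differentiable such that: ∇L_S and ∇L_D are L-Lipschitz jointly in (w,φ); L_D is M-Lipschitz; ∇²_w L_S is ρ-Lipschitz jointly in (w,φ) (in operator norm); and for every φ the function w ↦ L_S(w,φ) is μ-strongly convex, with 0 < μ ≤ L. Set α = μ/L² and let N ≥ 1. Define the inner-loop path w_0(w,φ) = w, w_{m+1}(w,φ) = w_m(w,φ) − α∇_w L_S(w_m(w,φ), φ), and the partial meta-gradient 𝑔(w,φ) := ∏_{m=0}^{N−1}(I − α∇²_w L_S(w_m(w,φ), φ)) · ∇_w L_D(w_N(w,φ), φ) (product ordered with the m = 0 factor leftmost). Then for any two points (w₁,φ₁), (w₂,φ₂): ‖𝑔(w₁,φ₁) − 𝑔(w₂,φ₂)‖ ≤ ( (1−αμ)^{3N/2} L + (2ρM/μ)(1−αμ)^{N−1} )·‖w₁ − w₂‖ + ( (1−αμ)^N L + αρMN(1−αμ)^{N−1} )·(2L/μ + 1)·‖φ₁ − φ₂‖. -/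

import Mathlib

open scoped RealInnerProductSpace

noncomputable section

abbrev Euc (n : ℕ) : Type := EuclideanSpace ℝ (Fin n)

variable {nw nf : ℕ}

/-- The partial gradient `∇_w h(w,φ)`. -/
noncomputable def gradW (h : Euc nw × Euc nf → ℝ) (w : Euc nw) (φ : Euc nf) : Euc nw :=
  gradient (fun w' => h (w', φ)) w

/-- The partial gradient `∇_φ h(w,φ)`. -/
noncomputable def gradPh (h : Euc nw × Euc nf → ℝ) (w : Euc nw) (φ : Euc nf) : Euc nf :=
  gradient (fun φ' => h (w, φ')) φ

/-- The Hessian `∇²_w h(w,φ)` of `w ↦ h(w,φ)`, as a continuous linear map. -/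
noncomputable def hessW (h : Euc nw × Euc nf → ℝ) (w : Euc nw) (φ : Euc nf) :
    Euc nw →L[ℝ] Euc nw :=
  fderiv ℝ (fun w' => gradW h w' φ) w

/-- The Fréchet derivative in `φ` of `φ ↦ ∇_w h(w,φ)`; the paper's mixed second
derivative matrix `∇_φ∇_w h(w,φ)` is its adjoint. -/
noncomputable def mixPW (h : Euc nw × Euc nf → ℝ) (w : Euc nw) (φ : Euc nf) :
    Euc nf →L[ℝ] Euc nw :=
  fderiv ℝ (fun φ' => gradW h w φ') φ

section AuxLemmas

variable {E : Type*} [NormedAddCommGroup E] [InnerProductSpace ℝ E]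

/-- Norm bound for a self-adjoint operator from a quadratic-form bound. -/
lemma aux_selfadj_norm_le (S : E →L[ℝ] E) (c : ℝ) (hc : 0 ≤ c)
    (hsym : ∀ x y, ⟪S x, y⟫ = ⟪x, S y⟫)
    (hb : ∀ x, |⟪S x, x⟫| ≤ c * ‖x‖ ^ 2) : ‖S‖ ≤ c := by
  refine S.opNorm_le_bound hc (fun x => ?_)
  rcases eq_or_ne (S x) 0 with h0 | h0
  · simp [h0, mul_nonneg hc (norm_nonneg x)]
  have hSx : 0 < ‖S x‖ := norm_pos_iff.2 h0
  set y : E := (‖x‖ / ‖S x‖) • S x with hy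
  have hyn : ‖y‖ = ‖x‖ := by
    rw [hy, norm_smul, norm_div, Real.norm_of_nonneg (norm_nonneg x),
      Real.norm_of_nonneg (norm_nonneg (S x))]
    field_simp
  have hkey : 4 * ⟪S x, y⟫ = ⟪S (x + y), x + y⟫ - ⟪S (x - y), x - y⟫ := by
    have h1 : ⟪S y, x⟫ = ⟪S x, y⟫ := by rw [hsym y x, real_inner_comm]
    simp only [map_add, map_sub, inner_add_left, inner_add_right, inner_sub_left,
      inner_sub_right]
    linarith
  have hpar : ‖x + y‖ ^ 2 + ‖x - y‖ ^ 2 = 2 * (‖x‖ ^ 2 + ‖y‖ ^ 2) := by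
    simpa [pow_two] using parallelogram_law_with_norm ℝ x y
  have h2 : 4 * ⟪S x, y⟫ ≤ 4 * (c * ‖x‖ ^ 2) := by
    rw [hkey]
    have b1 := (abs_le.1 (hb (x + y))).2
    have b2 := (neg_le_of_abs_le (hb (x - y)))
    have : ⟪S (x + y), x + y⟫ - ⟪S (x - y), x - y⟫ ≤ c * ‖x + y‖ ^ 2 + c * ‖x - y‖ ^ 2 := by
      linarith
    calc ⟪S (x + y), x + y⟫ - ⟪S (x - y), x - y⟫ ≤ c * ‖x + y‖ ^ 2 + c * ‖x - y‖ ^ 2 := this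
      _ = c * (‖x + y‖ ^ 2 + ‖x - y‖ ^ 2) := by ring
      _ = 4 * (c * ‖x‖ ^ 2) := by rw [hpar, hyn]; ring
  have h3 : ⟪S x, y⟫ = ‖x‖ * ‖S x‖ := by
    rw [hy, real_inner_smul_right, real_inner_self_eq_norm_sq]
    field_simp
  rw [h3] at h2
  have hx : 0 < ‖x‖ := by
    by_contra hx
    push_neg at hx
    have : x = 0 := norm_le_zero_iff.1 hx
    simp [this] at h0
  have := (mul_le_mul_iff_right₀ (by norm_num : (0:ℝ) < 4)).1 h2
  calc ‖S x‖ = (‖x‖ * ‖S x‖) / ‖x‖ := by field_simp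
    _ ≤ (c * ‖x‖ ^ 2) / ‖x‖ := by gcongr
    _ = c * ‖x‖ := by field_simp

lemma aux_strong_mono {f : E → ℝ} {g : E → E} {μ : ℝ}
    (hsc : ∀ w w' : E, f w + ⟪g w, w' - w⟫ + μ / 2 * ‖w' - w‖ ^ 2 ≤ f w') :
    ∀ w w' : E, μ * ‖w - w'‖ ^ 2 ≤ ⟪g w - g w', w - w'⟫ := by
  intro w w'
  have h1 := hsc w w'
  have h2 := hsc w' w
  have e1 : ‖w' - w‖ = ‖w - w'‖ := norm_sub_rev _ _
  have e2 : ⟪g w, w' - w⟫ = -⟪g w, w - w'⟫ := by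
    rw [show w' - w = -(w - w') by abel, inner_neg_right]
  have e3 : ⟪g w - g w', w - w'⟫ = ⟪g w, w - w'⟫ - ⟪g w', w - w'⟫ := by
    rw [inner_sub_left]
  rw [e1, e2] at h1
  linarith

lemma aux_sqrt_sq_add_sq_le {x y : ℝ} (hx : 0 ≤ x) (hy : 0 ≤ y) :
    Real.sqrt (x ^ 2 + y ^ 2) ≤ x + y := by
  rw [show x + y = Real.sqrt ((x + y) ^ 2) by rw [Real.sqrt_sq (by linarith)]]
  apply Real.sqrt_le_sqrt
  nlinarith

lemma aux_one_sub_sqrt {t : ℝ} (ht0 : 0 ≤ t) (ht1 : t ≤ 1) :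
    Real.sqrt (1 - t) ≤ 1 - t / 2 := by
  have h : (1 : ℝ) - t ≤ (1 - t / 2) ^ 2 := by nlinarith
  calc Real.sqrt (1 - t) ≤ Real.sqrt ((1 - t / 2) ^ 2) := Real.sqrt_le_sqrt h
    _ = 1 - t / 2 := Real.sqrt_sq (by linarith)

lemma aux_geom_sum_le {s c : ℝ} (hs0 : 0 ≤ s) (hsc : s ≤ 1 - c) (hc : 0 < c) (N : ℕ) :
    ∑ m ∈ Finset.range N, s ^ m ≤ 1 / c := by
  have hmul := geom_sum_mul s N
  have hsum0 : 0 ≤ ∑ m ∈ Finset.range N, s ^ m :=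
    Finset.sum_nonneg fun m _ => pow_nonneg hs0 m
  have hsN : 0 ≤ s ^ N := pow_nonneg hs0 N
  have key : c * (∑ m ∈ Finset.range N, s ^ m) ≤ 1 := by nlinarith
  rw [le_div_iff₀ hc]
  linarith [key]

end AuxLemmas

section AuxEuc

variable {n : ℕ}

/-- The gradient of a `C²` function is `C¹`. -/
lemma aux_gradient_contDiff {f : Euc n → ℝ} (hf : ContDiff ℝ 2 f) :
    ContDiff ℝ 1 (gradient f) := by
  have h1 : ContDiff ℝ 1 (fderiv ℝ f) := hf.fderiv_right (by norm_num)
  exact ((InnerProductSpace.toDual ℝ (Euc n)).symm.toContinuousLinearEquiv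
    |>.toContinuousLinearMap.contDiff).comp h1

/-- The derivative of the gradient is `toDual.symm` composed with the second derivative. -/
lemma aux_fderiv_gradient (f : Euc n → ℝ) (w : Euc n) :
    fderiv ℝ (gradient f) w =
      ((InnerProductSpace.toDual ℝ (Euc n)).symm.toContinuousLinearEquiv.toContinuousLinearMap).comp
        (fderiv ℝ (fderiv ℝ f) w) := by
  have h2 : gradient f = (fun p => (InnerProductSpace.toDual ℝ (Euc n)).symm p) ∘ fderiv ℝ f :=
    rfl
  rw [h2]
  exact (InnerProductSpace.toDual ℝ (Euc n)).symm.comp_fderiv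

/-- Symmetry of the Hessian (as `fderiv` of the gradient) of a `C²` function. -/
lemma aux_hess_symm {f : Euc n → ℝ} (hf : ContDiff ℝ 2 f) (w u v : Euc n) :
    ⟪fderiv ℝ (gradient f) w u, v⟫ = ⟪fderiv ℝ (gradient f) w v, u⟫ := by
  have hs : ∀ a b : Euc n, fderiv ℝ (fderiv ℝ f) w a b = fderiv ℝ (fderiv ℝ f) w b a :=
    (hf.contDiffAt).isSymmSndFDerivAt (by norm_num)
  rw [aux_fderiv_gradient]
  simp only [ContinuousLinearMap.coe_comp', Function.comp_apply,
    LinearIsometryEquiv.coe_toContinuousLinearEquiv,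
    ContinuousLinearEquiv.coe_coe]
  rw [InnerProductSpace.toDual_symm_apply, InnerProductSpace.toDual_symm_apply]
  exact hs u v

lemma aux_hess_lower {f : Euc n → ℝ} (μ : ℝ) (hf : ContDiff ℝ 2 f)
    (hmono : ∀ w w' : Euc n, μ * ‖w - w'‖ ^ 2 ≤ ⟪gradient f w - gradient f w', w - w'⟫)
    (w v : Euc n) : μ * ‖v‖ ^ 2 ≤ ⟪fderiv ℝ (gradient f) w v, v⟫ := by
  have hg : ContDiff ℝ 1 (gradient f) := aux_gradient_contDiff hf
  have hdiff : HasFDerivAt (gradient f) (fderiv ℝ (gradient f) w) w :=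
    (hg.differentiable one_ne_zero w).hasFDerivAt
  have hc : HasDerivAt (fun t : ℝ => w + t • v) v 0 := by
    simpa using ((hasDerivAt_id (0:ℝ)).smul_const v).const_add w
  have hcomp : HasDerivAt (fun t : ℝ => gradient f (w + t • v))
      (fderiv ℝ (gradient f) w v) 0 := by
    have hdiff' : HasFDerivAt (gradient f) (fderiv ℝ (gradient f) w) (w + (0:ℝ) • v) := by
      simpa using hdiff
    exact hdiff'.comp_hasDerivAt (x := (0:ℝ)) hc
  have hslope := hasDerivAt_iff_tendsto_slope.1 hcomp
  have hinner :
      Filter.Tendsto (fun t : ℝ => ⟪slope (fun t : ℝ => gradient f (w + t • v)) 0 t, v⟫)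
      (nhdsWithin 0 {(0:ℝ)}ᶜ) (nhds ⟪fderiv ℝ (gradient f) w v, v⟫) :=
    (hslope.inner tendsto_const_nhds)
  refine ge_of_tendsto hinner ?_
  filter_upwards [self_mem_nhdsWithin] with t ht
  have ht0 : t ≠ 0 := ht
  have hm := hmono (w + t • v) w
  have e1 : w + t • v - w = t • v := by abel
  rw [e1] at hm
  have hsl : slope (fun t : ℝ => gradient f (w + t • v)) 0 t
      = t⁻¹ • (gradient f (w + t • v) - gradient f w) := by
    simp [slope_def_field, slope, vsub_eq_sub]
  rw [hsl, real_inner_smul_left]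
  have hnv : ‖t • v‖ ^ 2 = t ^ 2 * ‖v‖ ^ 2 := by
    rw [norm_smul]; rw [Real.norm_eq_abs]; ring_nf; rw [sq_abs]; ring
  have hiv : ⟪gradient f (w + t • v) - gradient f w, t • v⟫
      = t * ⟪gradient f (w + t • v) - gradient f w, v⟫ := real_inner_smul_right _ _ _
  rw [hnv, hiv] at hm
  have key := mul_le_mul_of_nonneg_left hm (sq_nonneg t⁻¹)
  have l : (t⁻¹) ^ 2 * (μ * (t ^ 2 * ‖v‖ ^ 2)) = μ * ‖v‖ ^ 2 := by field_simp
  have rr : (t⁻¹) ^ 2 * (t * ⟪gradient f (w + t • v) - gradient f w, v⟫)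
      = t⁻¹ * ⟪gradient f (w + t • v) - gradient f w, v⟫ := by
    field_simp
  rw [l, rr] at key
  exact key

end AuxEuc

section AuxProd

variable {E : Type*} [NormedAddCommGroup E] [NormedSpace ℝ E]

lemma aux_prod_succ (A : ℕ → (E →L[ℝ] E)) (n : ℕ) :
    ((List.range (n+1)).map A).prod = ((List.range n).map A).prod * A n := by
  rw [List.range_succ, List.map_append]
  simp

lemma aux_prod_norm (A : ℕ → (E →L[ℝ] E)) (r : ℝ) (hA : ∀ m, ‖A m‖ ≤ r) :
    ∀ n, ‖((List.range n).map A).prod‖ ≤ r ^ n := by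
  have hr : 0 ≤ r := (norm_nonneg _).trans (hA 0)
  intro n
  induction n with
  | zero => simp only [List.range_zero, List.map_nil, List.prod_nil, pow_zero]; exact ContinuousLinearMap.norm_id_le
  | succ k ih =>
      rw [aux_prod_succ]
      calc ‖((List.range k).map A).prod * A k‖ ≤ ‖((List.range k).map A).prod‖ * ‖A k‖ :=
            norm_mul_le _ _
        _ ≤ r ^ k * r := mul_le_mul ih (hA k) (norm_nonneg _) (pow_nonneg hr k)
        _ = r ^ (k+1) := by ring

lemma aux_prod_diff (A B : ℕ → (E →L[ℝ] E)) (r : ℝ)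
    (hA : ∀ m, ‖A m‖ ≤ r) (hB : ∀ m, ‖B m‖ ≤ r) (c : ℕ → ℝ)
    (hc : ∀ m, ‖A m - B m‖ ≤ c m) :
    ∀ n, ‖((List.range (n+1)).map A).prod - ((List.range (n+1)).map B).prod‖
      ≤ r ^ n * ∑ m ∈ Finset.range (n+1), c m := by
  have hr : 0 ≤ r := (norm_nonneg _).trans (hA 0)
  intro n
  induction n with
  | zero => simpa using hc 0
  | succ k ih =>
      have hc0 : ∀ m, 0 ≤ c m := fun m => (norm_nonneg _).trans (hc m)
      rw [aux_prod_succ A (k+1), aux_prod_succ B (k+1)]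
      set PA := ((List.range (k+1)).map A).prod with hPA
      set PB := ((List.range (k+1)).map B).prod with hPB
      have hdec : PA * A (k+1) - PB * B (k+1)
          = (PA - PB) * A (k+1) + PB * (A (k+1) - B (k+1)) := by
        rw [sub_mul, mul_sub]; abel
      rw [hdec]
      have hPBn : ‖PB‖ ≤ r ^ (k+1) := aux_prod_norm B r hB (k+1)
      calc ‖(PA - PB) * A (k+1) + PB * (A (k+1) - B (k+1))‖
          ≤ ‖(PA - PB) * A (k+1)‖ + ‖PB * (A (k+1) - B (k+1))‖ := norm_add_le _ _
        _ ≤ ‖PA - PB‖ * ‖A (k+1)‖ + ‖PB‖ * ‖A (k+1) - B (k+1)‖ :=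
            add_le_add (norm_mul_le _ _) (norm_mul_le _ _)
        _ ≤ (r ^ k * ∑ m ∈ Finset.range (k+1), c m) * r + r ^ (k+1) * c (k+1) := by
            apply add_le_add
            · exact mul_le_mul ih (hA _) (norm_nonneg _)
                (mul_nonneg (pow_nonneg hr k) (Finset.sum_nonneg fun m _ => hc0 m))
            · exact mul_le_mul hPBn (hc _) (norm_nonneg _) (pow_nonneg hr _)
        _ = r ^ (k+1) * (∑ m ∈ Finset.range (k+1), c m + c (k+1)) := by ring
        _ = r ^ (k+1) * ∑ m ∈ Finset.range (k+2), c m := by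
            rw [Finset.sum_range_succ (n := k+1), Finset.sum_range_succ (n := k)]

end AuxProd

set_option maxHeartbeats 2000000 in
/-- Proposition 7.2, part 1: smoothness of the ANIL partial
meta-gradient in `w` under a strongly convex inner loop, per-task explicit bound.
Joint Lipschitz conditions on the product space are expressed via the pairs of
partial derivatives and the `ℓ²` norm. -/
theorem anil_meta_gradient_w_smoothness (nw nf : ℕ) (LS LD : Euc nw × Euc nf → ℝ)
    (L M ρ μ α : ℝ) (N : ℕ) (hN : 1 ≤ N) (hμ : 0 < μ) (hμL : μ ≤ L)
    (hCS : ContDiff ℝ 2 LS) (hCD : ContDiff ℝ 2 LD)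
    (hLipS : ∀ (w w' : Euc nw) (φ φ' : Euc nf),
      Real.sqrt (‖gradW LS w φ - gradW LS w' φ'‖ ^ 2 + ‖gradPh LS w φ - gradPh LS w' φ'‖ ^ 2)
        ≤ L * Real.sqrt (‖w - w'‖ ^ 2 + ‖φ - φ'‖ ^ 2))
    (hLipD : ∀ (w w' : Euc nw) (φ φ' : Euc nf),
      Real.sqrt (‖gradW LD w φ - gradW LD w' φ'‖ ^ 2 + ‖gradPh LD w φ - gradPh LD w' φ'‖ ^ 2)
        ≤ L * Real.sqrt (‖w - w'‖ ^ 2 + ‖φ - φ'‖ ^ 2))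
    (hMD : ∀ (w w' : Euc nw) (φ φ' : Euc nf),
      |LD (w, φ) - LD (w', φ')| ≤ M * Real.sqrt (‖w - w'‖ ^ 2 + ‖φ - φ'‖ ^ 2))
    (hρ : ∀ (w w' : Euc nw) (φ φ' : Euc nf),
      ‖hessW LS w φ - hessW LS w' φ'‖ ≤ ρ * Real.sqrt (‖w - w'‖ ^ 2 + ‖φ - φ'‖ ^ 2))
    (hsc : ∀ (φ : Euc nf) (w w' : Euc nw),
      LS (w, φ) + ⟪gradW LS w φ, w' - w⟫ + μ / 2 * ‖w' - w‖ ^ 2 ≤ LS (w', φ))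
    (hα : α = μ / L ^ 2)
    (wpath : Euc nw → Euc nf → ℕ → Euc nw)
    (h0 : ∀ w φ, wpath w φ 0 = w)
    (hrec : ∀ w φ m, wpath w φ (m + 1) = wpath w φ m - α • gradW LS (wpath w φ m) φ)
    (gmap : Euc nw → Euc nf → Euc nw)
    (hg : ∀ w φ, gmap w φ =
      (((List.range N).map (fun m =>
          (1 : Euc nw →L[ℝ] Euc nw) - α • hessW LS (wpath w φ m) φ)).prod)
        (gradW LD (wpath w φ N) φ)) :
    ∀ (w₁ w₂ : Euc nw) (φ₁ φ₂ : Euc nf),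
      ‖gmap w₁ φ₁ - gmap w₂ φ₂‖
        ≤ ((1 - α * μ) ^ (3 * (N : ℝ) / 2) * L + (2 * ρ * M / μ) * (1 - α * μ) ^ (N - 1))
            * ‖w₁ - w₂‖
          + ((1 - α * μ) ^ N * L + α * ρ * M * (N : ℝ) * (1 - α * μ) ^ (N - 1))
              * (2 * L / μ + 1) * ‖φ₁ - φ₂‖ := by
  intro w₁ w₂ φ₁ φ₂
  -- trivial case: both spaces are trivial
  by_cases hdim : nw = 0 ∧ nf = 0
  · obtain ⟨h1, h2⟩ := hdim
    subst h1; subst h2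
    haveI hsub : Subsingleton (Euc 0) := ⟨fun a b => by ext i; exact i.elim0⟩
    have e1 : w₁ = w₂ := Subsingleton.elim _ _
    have e2 : φ₁ = φ₂ := Subsingleton.elim _ _
    subst e1; subst e2
    simp
  -- nontrivial case: first derive `0 ≤ ρ` and `0 ≤ M`
  push_neg at hdim
  have hρ0 : 0 ≤ ρ := by
    rcases Nat.eq_zero_or_pos nw with h | h
    · have hnf : nf ≠ 0 := hdim h
      set u : Euc nf := EuclideanSpace.single (⟨0, Nat.pos_of_ne_zero hnf⟩ : Fin nf) (1:ℝ)
      have hu : ‖u - 0‖ = 1 := by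
        rw [sub_zero]
        rw [show u = EuclideanSpace.single (⟨0, Nat.pos_of_ne_zero hnf⟩ : Fin nf) (1:ℝ) from rfl,
          EuclideanSpace.norm_single]
        norm_num
      have := (norm_nonneg (hessW LS 0 u - hessW LS 0 0)).trans (hρ 0 0 u 0)
      rw [sub_self, norm_zero, hu] at this
      simpa using this
    · set u : Euc nw := EuclideanSpace.single (⟨0, h⟩ : Fin nw) (1:ℝ)
      have hu : ‖u - 0‖ = 1 := by
        rw [sub_zero]
        rw [show u = EuclideanSpace.single (⟨0, h⟩ : Fin nw) (1:ℝ) from rfl,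
          EuclideanSpace.norm_single]
        norm_num
      have := (norm_nonneg (hessW LS u 0 - hessW LS 0 0)).trans (hρ u 0 0 0)
      rw [sub_self, norm_zero, hu] at this
      simpa using this
  have hM0 : 0 ≤ M := by
    rcases Nat.eq_zero_or_pos nw with h | h
    · have hnf : nf ≠ 0 := hdim h
      set u : Euc nf := EuclideanSpace.single (⟨0, Nat.pos_of_ne_zero hnf⟩ : Fin nf) (1:ℝ)
      have hu : ‖u - 0‖ = 1 := by
        rw [sub_zero]
        rw [show u = EuclideanSpace.single (⟨0, Nat.pos_of_ne_zero hnf⟩ : Fin nf) (1:ℝ) from rfl,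
          EuclideanSpace.norm_single]
        norm_num
      have := (abs_nonneg (LD (0, u) - LD (0, 0))).trans (hMD 0 0 u 0)
      rw [sub_self, norm_zero, hu] at this
      simpa using this
    · set u : Euc nw := EuclideanSpace.single (⟨0, h⟩ : Fin nw) (1:ℝ)
      have hu : ‖u - 0‖ = 1 := by
        rw [sub_zero]
        rw [show u = EuclideanSpace.single (⟨0, h⟩ : Fin nw) (1:ℝ) from rfl,
          EuclideanSpace.norm_single]
        norm_num
      have := (abs_nonneg (LD (u, 0) - LD (0, 0))).trans (hMD u 0 0 0)
      rw [sub_self, norm_zero, hu] at this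
      simpa using this
  -- basic constants
  have hL : 0 < L := lt_of_lt_of_le hμ hμL
  have hα0 : 0 < α := by rw [hα]; positivity
  have hαμpos : 0 < α * μ := mul_pos hα0 hμ
  have hαμ : α * μ ≤ 1 := by
    rw [hα, div_mul_eq_mul_div, div_le_one (by positivity)]
    nlinarith
  have hαL : α * L ≤ 1 := by
    rw [hα, div_mul_eq_mul_div, div_le_one (by positivity)]
    nlinarith
  have hαL2 : α * L ^ 2 = μ := by rw [hα]; field_simp
  set r : ℝ := 1 - α * μ with hrdef
  have hr0 : 0 ≤ r := by simp only [hrdef]; linarith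
  set s : ℝ := Real.sqrt r with hsdef
  have hs0 : 0 ≤ s := Real.sqrt_nonneg r
  have hs_le : s ≤ 1 - α * μ / 2 := by
    rw [hsdef, hrdef]
    exact aux_one_sub_sqrt hαμpos.le hαμ
  have hss : s ^ 2 = r := Real.sq_sqrt hr0
  set K : ℝ := 2 * L / μ with hKdef
  have hK0 : 0 ≤ K := by positivity
  -- Lipschitz projections of the joint Lipschitz hypotheses
  have hnorm_le_sqrt : ∀ x y : ℝ, 0 ≤ x → x ≤ Real.sqrt (x ^ 2 + y ^ 2) := by
    intro x y hx
    have h := Real.sqrt_le_sqrt (show x ^ 2 ≤ x ^ 2 + y ^ 2 by nlinarith)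
    rwa [Real.sqrt_sq hx] at h
  have hsqrt_zero : ∀ x : ℝ, 0 ≤ x → Real.sqrt (x ^ 2 + 0 ^ 2) = x := by
    intro x hx
    rw [show x ^ 2 + 0 ^ 2 = x ^ 2 by ring, Real.sqrt_sq hx]
  have hLipW : ∀ (a b : Euc nw) (φ : Euc nf), ‖gradW LS a φ - gradW LS b φ‖ ≤ L * ‖a - b‖ := by
    intro a b φ
    have h := hLipS a b φ φ
    rw [sub_self, norm_zero, hsqrt_zero _ (norm_nonneg _)] at h
    exact le_trans (hnorm_le_sqrt _ _ (norm_nonneg _)) h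
  have hLipφ : ∀ (b : Euc nw) (φ φ' : Euc nf),
      ‖gradW LS b φ - gradW LS b φ'‖ ≤ L * ‖φ - φ'‖ := by
    intro b φ φ'
    have h := hLipS b b φ φ'
    rw [sub_self, norm_zero] at h
    rw [show (0:ℝ) ^ 2 + ‖φ - φ'‖ ^ 2 = ‖φ - φ'‖ ^ 2 + 0 ^ 2 from by ring] at h
    rw [hsqrt_zero _ (norm_nonneg _)] at h
    exact le_trans (hnorm_le_sqrt _ _ (norm_nonneg _)) h
  have hLD : ∀ (a b : Euc nw) (φ φ' : Euc nf),
      ‖gradW LD a φ - gradW LD b φ'‖ ≤ L * (‖a - b‖ + ‖φ - φ'‖) := by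
    intro a b φ φ'
    have h := hLipD a b φ φ'
    have h1 := le_trans (hnorm_le_sqrt _ _ (norm_nonneg (gradW LD a φ - gradW LD b φ'))) h
    have h2 : Real.sqrt (‖a - b‖ ^ 2 + ‖φ - φ'‖ ^ 2) ≤ ‖a - b‖ + ‖φ - φ'‖ :=
      aux_sqrt_sq_add_sq_le (norm_nonneg _) (norm_nonneg _)
    calc ‖gradW LD a φ - gradW LD b φ'‖
        ≤ L * Real.sqrt (‖a - b‖ ^ 2 + ‖φ - φ'‖ ^ 2) := h1
      _ ≤ L * (‖a - b‖ + ‖φ - φ'‖) := by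
          exact mul_le_mul_of_nonneg_left h2 hL.le
  -- strong monotonicity of the inner gradient
  have hmono : ∀ (φ : Euc nf) (a b : Euc nw),
      μ * ‖a - b‖ ^ 2 ≤ ⟪gradW LS a φ - gradW LS b φ, a - b⟫ := by
    intro φ
    exact aux_strong_mono (f := fun w => LS (w, φ)) (g := fun w => gradW LS w φ)
      (fun w w' => hsc φ w w')
  -- one gradient-descent step is a `√r`-contraction
  have hcontr : ∀ (φ : Euc nf) (a b : Euc nw),
      ‖(a - α • gradW LS a φ) - (b - α • gradW LS b φ)‖ ≤ s * ‖a - b‖ := by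
    intro φ a b
    set u : Euc nw := a - b with hu
    set d : Euc nw := gradW LS a φ - gradW LS b φ with hd
    have hv : (a - α • gradW LS a φ) - (b - α • gradW LS b φ) = u - α • d := by
      rw [hu, hd, smul_sub]; abel
    rw [hv]
    have hsq : ‖u - α • d‖ ^ 2 = ‖u‖ ^ 2 - 2 * (α * ⟪d, u⟫) + α ^ 2 * ‖d‖ ^ 2 := by
      rw [norm_sub_sq_real, real_inner_smul_right, norm_smul, Real.norm_of_nonneg hα0.le,
        real_inner_comm]
      ring
    have hin : μ * ‖u‖ ^ 2 ≤ ⟪d, u⟫ := hmono φ a b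
    have hdn : ‖d‖ ≤ L * ‖u‖ := hLipW a b φ
    have hbound : ‖u - α • d‖ ^ 2 ≤ r * ‖u‖ ^ 2 := by
      rw [hsq, hrdef]
      have h1 : α ^ 2 * ‖d‖ ^ 2 ≤ α ^ 2 * (L ^ 2 * ‖u‖ ^ 2) := by
        have := mul_le_mul hdn hdn (norm_nonneg d) (by positivity)
        calc α ^ 2 * ‖d‖ ^ 2 ≤ α ^ 2 * ((L * ‖u‖) * (L * ‖u‖)) := by nlinarith
          _ = α ^ 2 * (L ^ 2 * ‖u‖ ^ 2) := by ring
      have h2 : α ^ 2 * L ^ 2 = α * μ := by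
        calc α ^ 2 * L ^ 2 = α * (α * L ^ 2) := by ring
          _ = α * μ := by rw [hαL2]
      nlinarith
    calc ‖u - α • d‖ = Real.sqrt (‖u - α • d‖ ^ 2) := (Real.sqrt_sq (norm_nonneg _)).symm
      _ ≤ Real.sqrt (r * ‖u‖ ^ 2) := Real.sqrt_le_sqrt hbound
      _ = s * ‖u‖ := by
          rw [Real.sqrt_mul hr0, Real.sqrt_sq (norm_nonneg _), hsdef]
  -- contraction of the inner-loop path in `w`
  have hiter_w : ∀ (φ : Euc nf) (m : ℕ) (a b : Euc nw),
      ‖wpath a φ m - wpath b φ m‖ ≤ s ^ m * ‖a - b‖ := by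
    intro φ m
    induction m with
    | zero => intro a b; simp [h0]
    | succ k ih =>
        intro a b
        rw [hrec, hrec]
        calc ‖(wpath a φ k - α • gradW LS (wpath a φ k) φ)
              - (wpath b φ k - α • gradW LS (wpath b φ k) φ)‖
            ≤ s * ‖wpath a φ k - wpath b φ k‖ := hcontr φ _ _
          _ ≤ s * (s ^ k * ‖a - b‖) := mul_le_mul_of_nonneg_left (ih a b) hs0
          _ = s ^ (k+1) * ‖a - b‖ := by ring
  -- stability of the inner-loop path in `φ`
  have hiter_φ : ∀ (w : Euc nw) (m : ℕ) (φ φ' : Euc nf),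
      ‖wpath w φ m - wpath w φ' m‖ ≤ K * ‖φ - φ'‖ := by
    intro w m
    induction m with
    | zero =>
        intro φ φ'
        rw [h0, h0, sub_self, norm_zero]
        exact mul_nonneg hK0 (norm_nonneg _)
    | succ k ih =>
        intro φ φ'
        rw [hrec, hrec]
        set a : Euc nw := wpath w φ k with ha
        set b : Euc nw := wpath w φ' k with hb
        have hdec : (a - α • gradW LS a φ) - (b - α • gradW LS b φ')
            = ((a - α • gradW LS a φ) - (b - α • gradW LS b φ))
              + α • (gradW LS b φ' - gradW LS b φ) := by
          rw [smul_sub]; abel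
        rw [hdec]
        have hstep : α * ‖gradW LS b φ' - gradW LS b φ‖ ≤ α * (L * ‖φ - φ'‖) := by
          have := hLipφ b φ' φ
          rw [norm_sub_rev φ' φ] at this
          exact mul_le_mul_of_nonneg_left this hα0.le
        have hcoef : s * K + α * L ≤ K := by
          have h1 : s * K ≤ (1 - α * μ / 2) * K := mul_le_mul_of_nonneg_right hs_le hK0
          have h2 : (1 - α * μ / 2) * K = K - α * L := by
            rw [hKdef]; field_simp
          linarith
        calc ‖((a - α • gradW LS a φ) - (b - α • gradW LS b φ))
              + α • (gradW LS b φ' - gradW LS b φ)‖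
            ≤ ‖(a - α • gradW LS a φ) - (b - α • gradW LS b φ)‖
              + ‖α • (gradW LS b φ' - gradW LS b φ)‖ := norm_add_le _ _
          _ ≤ s * ‖a - b‖ + α * (L * ‖φ - φ'‖) := by
              apply add_le_add (hcontr φ a b)
              rw [norm_smul, Real.norm_of_nonneg hα0.le]
              exact hstep
          _ ≤ s * (K * ‖φ - φ'‖) + α * (L * ‖φ - φ'‖) :=
              add_le_add (mul_le_mul_of_nonneg_left (ih φ φ') hs0) le_rfl
          _ = (s * K + α * L) * ‖φ - φ'‖ := by ring
          _ ≤ K * ‖φ - φ'‖ := mul_le_mul_of_nonneg_right hcoef (norm_nonneg _)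
  -- Hessian bounds
  have hfC : ∀ φ : Euc nf, ContDiff ℝ 2 (fun w : Euc nw => LS (w, φ)) := by
    intro φ
    exact hCS.comp (contDiff_id.prodMk contDiff_const)
  have hgradeq : ∀ (φ : Euc nf), (fun w : Euc nw => gradW LS w φ)
      = gradient (fun w : Euc nw => LS (w, φ)) := by
    intro φ; rfl
  have hhesseq : ∀ (w : Euc nw) (φ : Euc nf),
      hessW LS w φ = fderiv ℝ (gradient (fun w : Euc nw => LS (w, φ))) w := by
    intro w φ
    rw [hessW, hgradeq]
  have hHle : ∀ (w : Euc nw) (φ : Euc nf), ‖hessW LS w φ‖ ≤ L := by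
    intro w φ
    rw [hessW]
    refine norm_fderiv_le_of_lip' ℝ hL.le ?_
    exact Filter.Eventually.of_forall (fun x => hLipW x w φ)
  have hHmu : ∀ (w : Euc nw) (φ : Euc nf) (v : Euc nw),
      μ * ‖v‖ ^ 2 ≤ ⟪hessW LS w φ v, v⟫ := by
    intro w φ v
    rw [hhesseq]
    exact aux_hess_lower μ (hfC φ)
      (fun a b => hmono φ a b) w v
  have hHsym : ∀ (w : Euc nw) (φ : Euc nf) (u v : Euc nw),
      ⟪hessW LS w φ u, v⟫ = ⟪hessW LS w φ v, u⟫ := by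
    intro w φ u v
    rw [hhesseq]
    exact aux_hess_symm (hfC φ) w u v
  -- norm bound on the inner-loop Jacobian factors
  have hSnorm : ∀ (w : Euc nw) (φ : Euc nf),
      ‖(1 : Euc nw →L[ℝ] Euc nw) - α • hessW LS w φ‖ ≤ r := by
    intro w φ
    have happ : ∀ x : Euc nw, ((1 : Euc nw →L[ℝ] Euc nw) - α • hessW LS w φ) x
        = x - α • (hessW LS w φ x) := by
      intro x
      simp [ContinuousLinearMap.sub_apply, ContinuousLinearMap.smul_apply]
    refine aux_selfadj_norm_le _ r hr0 (fun x y => ?_) (fun x => ?_)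
    · rw [happ, happ]
      rw [inner_sub_left, inner_sub_right, real_inner_smul_left, real_inner_smul_right]
      rw [show ⟪hessW LS w φ x, y⟫ = ⟪x, hessW LS w φ y⟫ from by
        rw [hHsym w φ x y, real_inner_comm]]
    · rw [happ, inner_sub_left, real_inner_smul_left, real_inner_self_eq_norm_sq]
      have hup : ⟪hessW LS w φ x, x⟫ ≤ L * ‖x‖ ^ 2 := by
        calc ⟪hessW LS w φ x, x⟫ ≤ ‖hessW LS w φ x‖ * ‖x‖ := real_inner_le_norm _ _
          _ ≤ (L * ‖x‖) * ‖x‖ := by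
              apply mul_le_mul_of_nonneg_right _ (norm_nonneg x)
              calc ‖hessW LS w φ x‖ ≤ ‖hessW LS w φ‖ * ‖x‖ :=
                    ContinuousLinearMap.le_opNorm _ _
                _ ≤ L * ‖x‖ := mul_le_mul_of_nonneg_right (hHle w φ) (norm_nonneg x)
          _ = L * ‖x‖ ^ 2 := by ring
      have hlo : μ * ‖x‖ ^ 2 ≤ ⟪hessW LS w φ x, x⟫ := hHmu w φ x
      rw [abs_le]
      constructor
      · nlinarith [sq_nonneg ‖x‖]
      · nlinarith [sq_nonneg ‖x‖]
  -- difference of Jacobian factors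
  have hSdiff : ∀ (x x' : Euc nw) (φ φ' : Euc nf),
      ‖((1 : Euc nw →L[ℝ] Euc nw) - α • hessW LS x φ)
        - ((1 : Euc nw →L[ℝ] Euc nw) - α • hessW LS x' φ')‖
      ≤ α * (ρ * Real.sqrt (‖x - x'‖ ^ 2 + ‖φ - φ'‖ ^ 2)) := by
    intro x x' φ φ'
    have e : ((1 : Euc nw →L[ℝ] Euc nw) - α • hessW LS x φ)
        - ((1 : Euc nw →L[ℝ] Euc nw) - α • hessW LS x' φ')
        = α • (hessW LS x' φ' - hessW LS x φ) := by
      rw [smul_sub]; abel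
    rw [e]
    calc ‖α • (hessW LS x' φ' - hessW LS x φ)‖
        ≤ ‖α‖ * ‖hessW LS x' φ' - hessW LS x φ‖ := ContinuousLinearMap.opNorm_smul_le _ _
      _ = α * ‖hessW LS x' φ' - hessW LS x φ‖ := by rw [Real.norm_of_nonneg hα0.le]
      _ ≤ α * (ρ * Real.sqrt (‖x' - x‖ ^ 2 + ‖φ' - φ‖ ^ 2)) :=
          mul_le_mul_of_nonneg_left (hρ x' x φ' φ) hα0.le
      _ = α * (ρ * Real.sqrt (‖x - x'‖ ^ 2 + ‖φ - φ'‖ ^ 2)) := by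
          rw [norm_sub_rev x' x, norm_sub_rev φ' φ]
  -- the outer gradient is bounded by `M`
  have hvM : ∀ (x : Euc nw) (φ : Euc nf), ‖gradW LD x φ‖ ≤ M := by
    intro x φ
    have heq : gradW LD x φ = (InnerProductSpace.toDual ℝ (Euc nw)).symm
        (fderiv ℝ (fun w' : Euc nw => LD (w', φ)) x) := rfl
    rw [heq, LinearIsometryEquiv.norm_map]
    refine norm_fderiv_le_of_lip' ℝ hM0 ?_
    refine Filter.Eventually.of_forall (fun y => ?_)
    have h := hMD y x φ φ
    rw [sub_self, norm_zero, hsqrt_zero _ (norm_nonneg _)] at h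
    calc ‖LD (y, φ) - LD (x, φ)‖ = |LD (y, φ) - LD (x, φ)| := rfl
      _ ≤ M * ‖y - x‖ := h
  -- final assembly
  obtain ⟨N', rfl⟩ : ∃ n, N = n + 1 := ⟨N - 1, (Nat.succ_pred_eq_of_pos hN).symm⟩
  set d : ℝ := ‖w₁ - w₂‖ with hddef
  set e : ℝ := ‖φ₁ - φ₂‖ with hedef
  have hd0 : 0 ≤ d := norm_nonneg _
  have he0 : 0 ≤ e := norm_nonneg _
  -- geometric sum bound
  have hgeom : ∑ m ∈ Finset.range (N'+1), s ^ m ≤ 2 / (α * μ) := by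
    have h := aux_geom_sum_le hs0 (by linarith : s ≤ 1 - α * μ / 2) (by positivity) (N'+1)
    calc ∑ m ∈ Finset.range (N'+1), s ^ m ≤ 1 / (α * μ / 2) := h
      _ = 2 / (α * μ) := by rw [one_div, inv_div]
  -- operators along the three paths
  have hS1 : ∀ m, ‖(1 : Euc nw →L[ℝ] Euc nw) - α • hessW LS (wpath w₁ φ₁ m) φ₁‖ ≤ r :=
    fun m => hSnorm _ _
  have hS2 : ∀ m, ‖(1 : Euc nw →L[ℝ] Euc nw) - α • hessW LS (wpath w₂ φ₁ m) φ₁‖ ≤ r :=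
    fun m => hSnorm _ _
  have hS3 : ∀ m, ‖(1 : Euc nw →L[ℝ] Euc nw) - α • hessW LS (wpath w₂ φ₂ m) φ₂‖ ≤ r :=
    fun m => hSnorm _ _
  -- difference bound for the `w`-shift
  have hc12 : ∀ m, ‖((1 : Euc nw →L[ℝ] Euc nw) - α • hessW LS (wpath w₁ φ₁ m) φ₁)
      - ((1 : Euc nw →L[ℝ] Euc nw) - α • hessW LS (wpath w₂ φ₁ m) φ₁)‖
      ≤ α * (ρ * (s ^ m * d)) := by
    intro m
    have h := hSdiff (wpath w₁ φ₁ m) (wpath w₂ φ₁ m) φ₁ φ₁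
    rw [sub_self, norm_zero, hsqrt_zero _ (norm_nonneg _)] at h
    refine h.trans ?_
    have := hiter_w φ₁ m w₁ w₂
    apply mul_le_mul_of_nonneg_left _ hα0.le
    exact mul_le_mul_of_nonneg_left this hρ0
  have hPd12 : ‖((List.range (N'+1)).map
        (fun m => (1 : Euc nw →L[ℝ] Euc nw) - α • hessW LS (wpath w₁ φ₁ m) φ₁)).prod
      - ((List.range (N'+1)).map
        (fun m => (1 : Euc nw →L[ℝ] Euc nw) - α • hessW LS (wpath w₂ φ₁ m) φ₁)).prod‖
      ≤ r ^ N' * (2 * ρ / μ * d) := by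
    have h := aux_prod_diff _ _ r hS1 hS2 (fun m => α * (ρ * (s ^ m * d))) hc12 N'
    refine h.trans ?_
    apply mul_le_mul_of_nonneg_left _ (pow_nonneg hr0 N')
    have hsum : ∑ m ∈ Finset.range (N'+1), α * (ρ * (s ^ m * d))
        = (α * ρ * d) * ∑ m ∈ Finset.range (N'+1), s ^ m := by
      rw [Finset.mul_sum]
      exact Finset.sum_congr rfl (fun m _ => by ring)
    rw [hsum]
    calc (α * ρ * d) * ∑ m ∈ Finset.range (N'+1), s ^ m
        ≤ (α * ρ * d) * (2 / (α * μ)) :=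
          mul_le_mul_of_nonneg_left hgeom (by positivity)
      _ = 2 * ρ / μ * d := by field_simp
  -- difference bound for the `φ`-shift
  have hjm : ∀ m, Real.sqrt (‖wpath w₂ φ₁ m - wpath w₂ φ₂ m‖ ^ 2 + e ^ 2) ≤ (K + 1) * e := by
    intro m
    calc Real.sqrt (‖wpath w₂ φ₁ m - wpath w₂ φ₂ m‖ ^ 2 + e ^ 2)
        ≤ ‖wpath w₂ φ₁ m - wpath w₂ φ₂ m‖ + e :=
          aux_sqrt_sq_add_sq_le (norm_nonneg _) he0
      _ ≤ K * e + e := add_le_add (hiter_φ w₂ m φ₁ φ₂) le_rfl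
      _ = (K + 1) * e := by ring
  have hc23 : ∀ m, ‖((1 : Euc nw →L[ℝ] Euc nw) - α • hessW LS (wpath w₂ φ₁ m) φ₁)
      - ((1 : Euc nw →L[ℝ] Euc nw) - α • hessW LS (wpath w₂ φ₂ m) φ₂)‖
      ≤ α * (ρ * ((K + 1) * e)) := by
    intro m
    have h := hSdiff (wpath w₂ φ₁ m) (wpath w₂ φ₂ m) φ₁ φ₂
    refine h.trans ?_
    apply mul_le_mul_of_nonneg_left _ hα0.le
    exact mul_le_mul_of_nonneg_left (hjm m) hρ0
  have hPd23 : ‖((List.range (N'+1)).map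
        (fun m => (1 : Euc nw →L[ℝ] Euc nw) - α • hessW LS (wpath w₂ φ₁ m) φ₁)).prod
      - ((List.range (N'+1)).map
        (fun m => (1 : Euc nw →L[ℝ] Euc nw) - α • hessW LS (wpath w₂ φ₂ m) φ₂)).prod‖
      ≤ r ^ N' * (((N' + 1 : ℕ) : ℝ) * (α * (ρ * ((K + 1) * e)))) := by
    have h := aux_prod_diff _ _ r hS2 hS3 (fun _ => α * (ρ * ((K + 1) * e))) hc23 N'
    refine h.trans ?_
    apply mul_le_mul_of_nonneg_left _ (pow_nonneg hr0 N')
    rw [Finset.sum_const, Finset.card_range, nsmul_eq_mul]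
  -- norms of the products
  have hPn1 : ‖((List.range (N'+1)).map
      (fun m => (1 : Euc nw →L[ℝ] Euc nw) - α • hessW LS (wpath w₁ φ₁ m) φ₁)).prod‖
      ≤ r ^ (N'+1) := aux_prod_norm _ r hS1 (N'+1)
  have hPn2 : ‖((List.range (N'+1)).map
      (fun m => (1 : Euc nw →L[ℝ] Euc nw) - α • hessW LS (wpath w₂ φ₁ m) φ₁)).prod‖
      ≤ r ^ (N'+1) := aux_prod_norm _ r hS2 (N'+1)
  -- bounds on the outer gradients
  have hv12 : ‖gradW LD (wpath w₁ φ₁ (N'+1)) φ₁ - gradW LD (wpath w₂ φ₁ (N'+1)) φ₁‖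
      ≤ L * (s ^ (N'+1) * d) := by
    have h := hLD (wpath w₁ φ₁ (N'+1)) (wpath w₂ φ₁ (N'+1)) φ₁ φ₁
    rw [sub_self, norm_zero, add_zero] at h
    refine h.trans ?_
    exact mul_le_mul_of_nonneg_left (hiter_w φ₁ (N'+1) w₁ w₂) hL.le
  have hv23 : ‖gradW LD (wpath w₂ φ₁ (N'+1)) φ₁ - gradW LD (wpath w₂ φ₂ (N'+1)) φ₂‖
      ≤ L * ((K + 1) * e) := by
    have h := hLD (wpath w₂ φ₁ (N'+1)) (wpath w₂ φ₂ (N'+1)) φ₁ φ₂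
    refine h.trans ?_
    apply mul_le_mul_of_nonneg_left _ hL.le
    calc ‖wpath w₂ φ₁ (N'+1) - wpath w₂ φ₂ (N'+1)‖ + e ≤ K * e + e :=
          add_le_add (hiter_φ w₂ (N'+1) φ₁ φ₂) le_rfl
      _ = (K + 1) * e := by ring
  -- term A: shift in w
  have hA : ‖gmap w₁ φ₁ - gmap w₂ φ₁‖
      ≤ r ^ (N'+1) * (L * (s ^ (N'+1) * d)) + r ^ N' * (2 * ρ / μ * d) * M := by
    rw [hg w₁ φ₁, hg w₂ φ₁]
    set P1 := ((List.range (N'+1)).map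
      (fun m => (1 : Euc nw →L[ℝ] Euc nw) - α • hessW LS (wpath w₁ φ₁ m) φ₁)).prod with hP1
    set P2 := ((List.range (N'+1)).map
      (fun m => (1 : Euc nw →L[ℝ] Euc nw) - α • hessW LS (wpath w₂ φ₁ m) φ₁)).prod with hP2
    set u1 := gradW LD (wpath w₁ φ₁ (N'+1)) φ₁ with hu1
    set u2 := gradW LD (wpath w₂ φ₁ (N'+1)) φ₁ with hu2
    have hdec : P1 u1 - P2 u2 = P1 (u1 - u2) + (P1 - P2) u2 := by
      rw [map_sub, ContinuousLinearMap.sub_apply]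
      abel
    rw [hdec]
    calc ‖P1 (u1 - u2) + (P1 - P2) u2‖ ≤ ‖P1 (u1 - u2)‖ + ‖(P1 - P2) u2‖ := norm_add_le _ _
      _ ≤ ‖P1‖ * ‖u1 - u2‖ + ‖P1 - P2‖ * ‖u2‖ :=
          add_le_add (ContinuousLinearMap.le_opNorm _ _) (ContinuousLinearMap.le_opNorm _ _)
      _ ≤ r ^ (N'+1) * (L * (s ^ (N'+1) * d)) + r ^ N' * (2 * ρ / μ * d) * M := by
          apply add_le_add
          · exact mul_le_mul hPn1 hv12 (norm_nonneg _) (pow_nonneg hr0 _)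
          · apply mul_le_mul hPd12 (hvM _ _) (norm_nonneg _)
            have : (0:ℝ) ≤ 2 * ρ / μ * d := by positivity
            positivity
  -- term B: shift in φ
  have hB : ‖gmap w₂ φ₁ - gmap w₂ φ₂‖
      ≤ r ^ (N'+1) * (L * ((K + 1) * e))
        + r ^ N' * (((N' + 1 : ℕ) : ℝ) * (α * (ρ * ((K + 1) * e)))) * M := by
    rw [hg w₂ φ₁, hg w₂ φ₂]
    set P2 := ((List.range (N'+1)).map
      (fun m => (1 : Euc nw →L[ℝ] Euc nw) - α • hessW LS (wpath w₂ φ₁ m) φ₁)).prod with hP2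
    set P3 := ((List.range (N'+1)).map
      (fun m => (1 : Euc nw →L[ℝ] Euc nw) - α • hessW LS (wpath w₂ φ₂ m) φ₂)).prod with hP3
    set u2 := gradW LD (wpath w₂ φ₁ (N'+1)) φ₁ with hu2
    set u3 := gradW LD (wpath w₂ φ₂ (N'+1)) φ₂ with hu3
    have hdec : P2 u2 - P3 u3 = P2 (u2 - u3) + (P2 - P3) u3 := by
      rw [map_sub, ContinuousLinearMap.sub_apply]
      abel
    rw [hdec]
    calc ‖P2 (u2 - u3) + (P2 - P3) u3‖ ≤ ‖P2 (u2 - u3)‖ + ‖(P2 - P3) u3‖ := norm_add_le _ _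
      _ ≤ ‖P2‖ * ‖u2 - u3‖ + ‖P2 - P3‖ * ‖u3‖ :=
          add_le_add (ContinuousLinearMap.le_opNorm _ _) (ContinuousLinearMap.le_opNorm _ _)
      _ ≤ r ^ (N'+1) * (L * ((K + 1) * e))
          + r ^ N' * (((N' + 1 : ℕ) : ℝ) * (α * (ρ * ((K + 1) * e)))) * M := by
          apply add_le_add
          · exact mul_le_mul hPn2 hv23 (norm_nonneg _) (pow_nonneg hr0 _)
          · apply mul_le_mul hPd23 (hvM _ _) (norm_nonneg _)
            positivity
  -- the rpow identity
  have hrpow : r ^ (3 * (((N' + 1 : ℕ)) : ℝ) / 2) = r ^ (N'+1) * s ^ (N'+1) := by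
    rcases eq_or_lt_of_le hr0 with h | h
    · have hs' : s = 0 := by rw [hsdef, ← h, Real.sqrt_zero]
      rw [← h, hs', Real.zero_rpow (by positivity), zero_pow (Nat.succ_ne_zero N'), mul_zero]
    · rw [show (3 * (((N' + 1 : ℕ)) : ℝ) / 2)
          = (((N' + 1 : ℕ)) : ℝ) + (1/2 : ℝ) * (((N' + 1 : ℕ)) : ℝ) by ring]
      rw [Real.rpow_add h, Real.rpow_natCast]
      congr 1
      rw [Real.rpow_mul hr0, Real.rpow_natCast]
      congr 1
      rw [hsdef, Real.sqrt_eq_rpow]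
  -- put everything together
  have htri : ‖gmap w₁ φ₁ - gmap w₂ φ₂‖
      ≤ ‖gmap w₁ φ₁ - gmap w₂ φ₁‖ + ‖gmap w₂ φ₁ - gmap w₂ φ₂‖ := by
    have := norm_add_le (gmap w₁ φ₁ - gmap w₂ φ₁) (gmap w₂ φ₁ - gmap w₂ φ₂)
    rwa [sub_add_sub_cancel] at this
  have hfinal := htri.trans (add_le_add hA hB)
  refine hfinal.trans (le_of_eq ?_)
  rw [hrpow]
  simp only [Nat.add_sub_cancel]
  push_cast
  ring
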